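/- Let T be a finite rooted tree with n nodes equipped with a rank labeling r assigning a natural number to each node, and suppose that for every node v of T there exist r(v) pairwise distinct children c_1, …, c_{r(v)} of v such that for each i with 1 ≤ i ≤ r(v) and r(v) − i − 1 ≥ 0, r(c_i) ≥ r(v) − i − 1. Then r(root) ≤ log n / log φ, where φ = (1 + √5)/2 is the golden ratio and root is the root of T. -/

import Mathlib

/-- A finitely-branching rose tree whose nodes are labeled by natural-number
ranks: a tree is a root node (with its rank) together with a finite list of
subtrees. -/
inductive RankTree : Type where
  | node : ℕ → List RankTree → RankTree

namespace RankTree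

/-- The rank of the root node of a tree. -/
def rank : RankTree → ℕ
  | node r _ => r

/-- The list of subtrees rooted at the children of the root. -/
def children : RankTree → List RankTree
  | node _ cs => cs

/-- The number of nodes of a tree. -/
def size : RankTree → ℕ
  | node _ cs => 1 + (cs.attach.map (fun c => size c.1)).sum
decreasing_by
  have := List.sizeOf_lt_of_mem c.2
  cases c
  simp only [RankTree.node.sizeOf_spec] at *
  omega

/-- `IsNode v T` holds iff `v` is (the subtree rooted at) a node of `T`. -/
inductive IsNode : RankTree → RankTree → Prop
  | refl (T : RankTree) : IsNode T T
  | child {v c T : RankTree} : c ∈ T.children → IsNode v c → IsNode v T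

/-- A tree satisfies the rank invariant if every node `v` has `rank v`
pairwise distinct children `c_1, …, c_{rank v}` (given by an injection from
`Fin (rank v)` into the positions of the children of `v`) such that
`rank (c_i) ≥ rank v − i − 1` for `1 ≤ i ≤ rank v` (with truncated
subtraction, so the requirement is vacuous when `rank v − i − 1 < 0`). -/
def RankInvariant (T : RankTree) : Prop :=
  ∀ v : RankTree, IsNode v T →
    ∃ f : Fin v.rank → Fin v.children.length, Function.Injective f ∧
      ∀ i : Fin v.rank, (v.children.get (f i)).rank ≥ v.rank - (i.val + 1) - 1

theorem size_eq (r : ℕ) (cs : List RankTree) :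
    (node r cs).size = 1 + (cs.map size).sum := by
  rw [size]
  congr 1
  simp [List.attach_map_val]

theorem fib_le_size : ∀ T : RankTree, T.RankInvariant → Nat.fib (T.rank + 2) ≤ T.size
  | node r cs, hT => by
    obtain ⟨f0, hinj0, hrk0⟩ := hT (node r cs) (IsNode.refl _)
    let f : Fin r → Fin cs.length := f0
    have hinj : Function.Injective f := fun a b h => hinj0 h
    have hrk : ∀ i : Fin r, (cs.get (f i)).rank ≥ r - (i.val + 1) - 1 := fun i => hrk0 i
    have hchild : ∀ i : Fin r, Nat.fib (r - i.val) ≤ (cs.get (f i)).size := by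
      intro i
      have hmem : cs.get (f i) ∈ cs := cs.get_mem (f i)
      have hinv : (cs.get (f i)).RankInvariant := by
        intro v hv
        exact hT v (IsNode.child (T := node r cs) hmem hv)
      have hrec := fib_le_size (cs.get (f i)) hinv
      refine le_trans (Nat.fib_mono ?_) hrec
      have := hrk i
      omega
    have hsum1 : ∑ i : Fin r, Nat.fib (r - i.val) = Nat.fib (r + 2) - 1 := by
      have h1 : ∑ i ∈ Finset.range r, Nat.fib (r - i) = ∑ i ∈ Finset.range r, Nat.fib (i + 1) := by
        rw [← Finset.sum_range_reflect]
        apply Finset.sum_congr rfl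
        intro i hi
        simp only [Finset.mem_range] at hi
        congr 1
        omega
      have h2 : ∑ i ∈ Finset.range r, Nat.fib (i + 1) = ∑ i ∈ Finset.range (r + 1), Nat.fib i := by
        rw [Finset.sum_range_succ']
        simp
      rw [Fin.sum_univ_eq_sum_range (fun k => Nat.fib (r - k)) r, h1, h2]
      have h3 := Nat.fib_succ_eq_succ_sum (r + 1)
      have e : r + 1 + 1 = r + 2 := by omega
      rw [e] at h3
      omega
    have hsum2 : ∑ i : Fin r, (cs.get (f i)).size ≤ ∑ j : Fin cs.length, (cs.get j).size := by
      have himg : ∑ j ∈ Finset.univ.image f, (cs.get j).size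
          = ∑ i : Fin r, (cs.get (f i)).size :=
        Finset.sum_image (fun x _ y _ h => hinj h)
      rw [← himg]
      exact Finset.sum_le_sum_of_subset (Finset.subset_univ _)
    have hsum3 : (cs.map size).sum = ∑ j : Fin cs.length, (cs.get j).size := by
      conv_lhs => rw [← List.ofFn_get cs]
      rw [List.map_ofFn, List.sum_ofFn]
      rfl
    have hle : ∑ i : Fin r, Nat.fib (r - i.val) ≤ (cs.map size).sum := by
      calc ∑ i : Fin r, Nat.fib (r - i.val) ≤ ∑ i : Fin r, (cs.get (f i)).size :=
            Finset.sum_le_sum (fun i _ => hchild i)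
        _ ≤ _ := hsum2.trans_eq hsum3.symm
    have hfib : 0 < Nat.fib (r + 2) := Nat.fib_pos.mpr (by omega)
    have : Nat.fib ((node r cs).rank + 2) = Nat.fib (r + 2) := rfl
    rw [this, size_eq]
    omega
decreasing_by
  have h := List.sizeOf_lt_of_mem hmem
  have he : cs.get (f i) = cs.get (f0 i) := rfl
  rw [he] at h
  simp only [RankTree.node.sizeOf_spec]
  omega

end RankTree

theorem gold_pow_le_fib (n : ℕ) : Real.goldenRatio ^ n ≤ (Nat.fib (n + 2) : ℝ) := by
  induction n with
  | zero => norm_num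
  | succ m _ =>
    have h := Real.goldenRatio_mul_fib_succ_add_fib m
    have h3 : (Nat.fib (m + 3) : ℝ) = Nat.fib (m + 2) + Nat.fib (m + 1) := by
      push_cast [Nat.fib_add_two]; ring
    have h4 : (Nat.fib (m + 2) : ℝ) = Nat.fib (m + 1) + Nat.fib m := by
      push_cast [Nat.fib_add_two]; ring
    have hpos : (0 : ℝ) ≤ Nat.fib (m + 1) := by positivity
    calc Real.goldenRatio ^ (m + 1) = Real.goldenRatio * Nat.fib (m + 1) + Nat.fib m := h.symm
      _ ≤ (Nat.fib (m + 1 + 2) : ℝ) := by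
          rw [show m + 1 + 2 = m + 3 from rfl, h3, h4]
          nlinarith [Real.goldenRatio_lt_two]

/-- In a finite rooted tree with `n` nodes satisfying the rank invariant, the
rank of the root is at most `log n / log φ`, where `φ = (1 + √5)/2` is the
golden ratio and `log` is the natural logarithm. -/
theorem rank_le_log_size_of_rankInvariant (T : RankTree) (n : ℕ)
    (hn : T.size = n) (hT : T.RankInvariant) :
    (T.rank : ℝ) ≤ Real.log n / Real.log ((1 + Real.sqrt 5) / 2) := by
  have hfib : Nat.fib (T.rank + 2) ≤ n := hn ▸ T.fib_le_size hT
  have h1 : Real.goldenRatio ^ T.rank ≤ (n : ℝ) :=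
    (gold_pow_le_fib T.rank).trans (by exact_mod_cast hfib)
  have hg : (1 : ℝ) < (1 + Real.sqrt 5) / 2 := Real.one_lt_goldenRatio
  have hlog : 0 < Real.log ((1 + Real.sqrt 5) / 2) := Real.log_pos hg
  rw [le_div_iff₀ hlog]
  have hpow : (0 : ℝ) < Real.goldenRatio ^ T.rank := pow_pos Real.goldenRatio_pos _
  calc (T.rank : ℝ) * Real.log ((1 + Real.sqrt 5) / 2)
      = Real.log (Real.goldenRatio ^ T.rank) := (Real.log_pow _ _).symm
    _ ≤ Real.log n := Real.log_le_log hpow h1
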